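/- For arbitrary vectors a, b, c, d, A, B ∈ ℝ², the curves r₁(t) = ½(a cos ωt + A cos 2ωt) + (1/(4mω))(2b sin ωt + B sin 2ωt), r₃(t) = ½(−a cos ωt + A cos 2ωt) + (1/(4mω))(−2b sin ωt + B sin 2ωt), r₂(t) = ½(c cos ωt − A cos 2ωt) + (1/(4mω))(2d sin ωt − B sin 2ωt), and r₄(t) = ½(−c cos ωt − A cos 2ωt) + (1/(4mω))(−2d sin ωt − B sin 2ωt) form a solution of the four-body system, and moreover r₁(t) + r₂(t) + r₃(t) + r₄(t) = 0 for all t ∈ ℝ. -/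

import Mathlib

noncomputable section

/-- The Euclidean plane. -/
abbrev Plane : Type := EuclideanSpace ℝ (Fin 2)

/-- A solution of the planar four-body system with pairwise quadratic potential
`V = (mω²/4)(2‖r₁−r₂‖² + 2‖r₂−r₃‖² + 2‖r₃−r₄‖² + 2‖r₁−r₄‖² − ‖r₁−r₃‖² − ‖r₂−r₄‖²)`:
four twice differentiable curves satisfying Newton's equations
`rᵢ'' = −ω²((rᵢ − r_{i+1}) + (rᵢ − r_{i−1}) − ½(rᵢ − r_{i+2}))` (indices mod 4). -/
def IsFourBodySolution (ω : ℝ) (r₁ r₂ r₃ r₄ : ℝ → Plane) : Prop :=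
  (Differentiable ℝ r₁ ∧ Differentiable ℝ (deriv r₁)) ∧
  (Differentiable ℝ r₂ ∧ Differentiable ℝ (deriv r₂)) ∧
  (Differentiable ℝ r₃ ∧ Differentiable ℝ (deriv r₃)) ∧
  (Differentiable ℝ r₄ ∧ Differentiable ℝ (deriv r₄)) ∧
  (∀ t : ℝ, deriv (deriv r₁) t =
    (-(ω ^ 2)) • ((r₁ t - r₂ t) + (r₁ t - r₄ t) - (1 / 2 : ℝ) • (r₁ t - r₃ t))) ∧
  (∀ t : ℝ, deriv (deriv r₂) t =
    (-(ω ^ 2)) • ((r₂ t - r₃ t) + (r₂ t - r₁ t) - (1 / 2 : ℝ) • (r₂ t - r₄ t))) ∧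
  (∀ t : ℝ, deriv (deriv r₃) t =
    (-(ω ^ 2)) • ((r₃ t - r₄ t) + (r₃ t - r₂ t) - (1 / 2 : ℝ) • (r₃ t - r₁ t))) ∧
  (∀ t : ℝ, deriv (deriv r₄) t =
    (-(ω ^ 2)) • ((r₄ t - r₁ t) + (r₄ t - r₃ t) - (1 / 2 : ℝ) • (r₄ t - r₂ t)))

/-- Explicit trigonometric family of curves (general solution form). -/
def bodyCurve (m ω : ℝ) (x y X Y : Plane) : ℝ → Plane := fun t =>
  (Real.cos (ω * t) / 2) • x + (Real.cos (2 * ω * t) / 2) • X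
    + (Real.sin (ω * t) / (2 * m * ω)) • y + (Real.sin (2 * ω * t) / (4 * m * ω)) • Y


lemma hcos_aux (k c : ℝ) (v : Plane) (t : ℝ) :
    HasDerivAt (fun t => (Real.cos (k * t) / c) • v)
      ((Real.sin (k * t) / c) • ((-k) • v)) t := by
  have h : HasDerivAt (fun t : ℝ => Real.cos (k * t)) (-Real.sin (k * t) * k) t := by
    exact ((Real.hasDerivAt_cos (k * t)).comp t ((hasDerivAt_id t).const_mul k)).congr_deriv (by simp)
  have := (h.div_const c).smul_const v
  refine this.congr_deriv ?_
  rw [smul_smul]; ring_nf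

lemma hsin_aux (k c : ℝ) (v : Plane) (t : ℝ) :
    HasDerivAt (fun t => (Real.sin (k * t) / c) • v)
      ((Real.cos (k * t) / c) • (k • v)) t := by
  have h : HasDerivAt (fun t : ℝ => Real.sin (k * t)) (Real.cos (k * t) * k) t := by
    exact ((Real.hasDerivAt_sin (k * t)).comp t ((hasDerivAt_id t).const_mul k)).congr_deriv (by simp)
  have := (h.div_const c).smul_const v
  refine this.congr_deriv ?_
  rw [smul_smul]; ring_nf

/-- First derivative of `bodyCurve`. -/
def bodyD (m ω : ℝ) (x y X Y : Plane) : ℝ → Plane := fun t =>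
  (Real.sin (ω * t) / 2) • ((-ω) • x) + (Real.sin (2 * ω * t) / 2) • ((-(2 * ω)) • X)
    + (Real.cos (ω * t) / (2 * m * ω)) • (ω • y)
    + (Real.cos (2 * ω * t) / (4 * m * ω)) • ((2 * ω) • Y)

/-- Second derivative of `bodyCurve`. -/
def bodyDD (m ω : ℝ) (x y X Y : Plane) : ℝ → Plane := fun t =>
  (Real.cos (ω * t) / 2) • (ω • ((-ω) • x))
    + (Real.cos (2 * ω * t) / 2) • ((2 * ω) • ((-(2 * ω)) • X))
    + (Real.sin (ω * t) / (2 * m * ω)) • ((-ω) • (ω • y))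
    + (Real.sin (2 * ω * t) / (4 * m * ω)) • ((-(2 * ω)) • ((2 * ω) • Y))

lemma body_hasDerivAt (m ω : ℝ) (x y X Y : Plane) (t : ℝ) :
    HasDerivAt (bodyCurve m ω x y X Y) (bodyD m ω x y X Y t) t :=
  (((hcos_aux ω 2 x t).add (hcos_aux (2 * ω) 2 X t)).add (hsin_aux ω (2 * m * ω) y t)).add
    (hsin_aux (2 * ω) (4 * m * ω) Y t)

lemma bodyD_hasDerivAt (m ω : ℝ) (x y X Y : Plane) (t : ℝ) :
    HasDerivAt (bodyD m ω x y X Y) (bodyDD m ω x y X Y t) t :=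
  (((hsin_aux ω 2 ((-ω) • x) t).add (hsin_aux (2 * ω) 2 ((-(2 * ω)) • X) t)).add
      (hcos_aux ω (2 * m * ω) (ω • y) t)).add (hcos_aux (2 * ω) (4 * m * ω) ((2 * ω) • Y) t)

lemma body_deriv (m ω : ℝ) (x y X Y : Plane) :
    deriv (bodyCurve m ω x y X Y) = bodyD m ω x y X Y :=
  funext fun t => (body_hasDerivAt m ω x y X Y t).deriv

lemma body_deriv2 (m ω : ℝ) (x y X Y : Plane) (t : ℝ) :
    deriv (deriv (bodyCurve m ω x y X Y)) t = bodyDD m ω x y X Y t := by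
  rw [body_deriv]; exact (bodyD_hasDerivAt m ω x y X Y t).deriv

lemma body_diff (m ω : ℝ) (x y X Y : Plane) :
    Differentiable ℝ (bodyCurve m ω x y X Y) ∧
      Differentiable ℝ (deriv (bodyCurve m ω x y X Y)) := by
  constructor
  · exact fun t => (body_hasDerivAt m ω x y X Y t).differentiableAt
  · rw [body_deriv]
    exact fun t => (bodyD_hasDerivAt m ω x y X Y t).differentiableAt

lemma newton (m ω : ℝ) (hm : m ≠ 0) (hω : ω ≠ 0) (x y X Y p q : Plane) (t : ℝ) :
    deriv (deriv (bodyCurve m ω x y X Y)) t =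
      (-(ω ^ 2)) • ((bodyCurve m ω x y X Y t - bodyCurve m ω p q (-X) (-Y) t)
        + (bodyCurve m ω x y X Y t - bodyCurve m ω (-p) (-q) (-X) (-Y) t)
        - (1 / 2 : ℝ) • (bodyCurve m ω x y X Y t - bodyCurve m ω (-x) (-y) X Y t)) := by
  rw [body_deriv2]
  simp only [bodyDD, bodyCurve]
  match_scalars <;> field_simp <;> ring

/-- For arbitrary vectors `a b c d A B ∈ ℝ²`, the explicit trigonometric
curves `r₁, r₂, r₃, r₄` form a solution of the four-body system, and their sum vanishes
identically. -/
theorem explicit_curves_solve_four_body (m ω : ℝ) (hm : 0 < m) (hω : 0 < ω)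
    (a b c d A B : Plane) :
    IsFourBodySolution ω
      (bodyCurve m ω a b A B)
      (bodyCurve m ω c d (-A) (-B))
      (bodyCurve m ω (-a) (-b) A B)
      (bodyCurve m ω (-c) (-d) (-A) (-B))
    ∧ ∀ t : ℝ,
      bodyCurve m ω a b A B t + bodyCurve m ω c d (-A) (-B) t
        + bodyCurve m ω (-a) (-b) A B t + bodyCurve m ω (-c) (-d) (-A) (-B) t = 0 := by
  refine ⟨⟨body_diff m ω a b A B, body_diff m ω c d (-A) (-B),
    body_diff m ω (-a) (-b) A B, body_diff m ω (-c) (-d) (-A) (-B),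
    fun t => ?_, fun t => ?_, fun t => ?_, fun t => ?_⟩, fun t => ?_⟩
  · simpa using newton m ω hm.ne' hω.ne' a b A B c d t
  · simpa using newton m ω hm.ne' hω.ne' c d (-A) (-B) (-a) (-b) t
  · simpa using newton m ω hm.ne' hω.ne' (-a) (-b) A B (-c) (-d) t
  · simpa using newton m ω hm.ne' hω.ne' (-c) (-d) (-A) (-B) a b t
  · simp only [bodyCurve]
    module
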